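/- Fix n ≥ 2. On (ℂ²)^⊗n, consider the set 𝒞 of all unitaries of the form e^{iφ} · ∏_{k=1}^{m} U(π/4)_{i_k j_k}, where φ ∈ ℝ, m ∈ ℕ, and each (i_k, j_k) is a pair of distinct qubit indices (i.e. all global-phase multiples of finite products of √SWAP gates). Then the exchange gate exp(i(π/3)·SWAP₁₂) does NOT lie in the topological closure of 𝒞. In particular, circuits built solely from √SWAP gates cannot approximate arbitrary exchange gates even up to global phase, so XQP(π/4) is a strict subset of XQP. -/
import Mathlib


open Matrix Complex

noncomputable section

/-- The SWAP of tensor factors `i` and `j` on `(ℂ²)^⊗n`. -/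
def swapM (n : ℕ) (i j : Fin n) : Matrix (Fin n → Fin 2) (Fin n → Fin 2) ℂ :=
  fun x y => if x = y ∘ Equiv.swap i j then 1 else 0

/-- The exchange gate `U(θ)_{ij} = exp(iθ·SWAP_{ij}) = cos θ·I + i sin θ·SWAP_{ij}`. -/
def exch (n : ℕ) (θ : ℝ) (i j : Fin n) : Matrix (Fin n → Fin 2) (Fin n → Fin 2) ℂ :=
  (Real.cos θ : ℂ) • (1 : Matrix (Fin n → Fin 2) (Fin n → Fin 2) ℂ)
    + (Complex.I * (Real.sin θ : ℂ)) • swapM n i j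

/-- The set of all global-phase multiples of finite products of `√SWAP` gates on `n`
qubits. -/
def sqrtSwapCircuits (n : ℕ) : Set (Matrix (Fin n → Fin 2) (Fin n → Fin 2) ℂ) :=
  {M | ∃ (φ : ℝ) (L : List (Fin n × Fin n)), (∀ p ∈ L, p.1 ≠ p.2) ∧
    M = Complex.exp (Complex.I * (φ : ℂ)) •
      (L.map fun p => exch n (Real.pi / 4) p.1 p.2).prod}

namespace SqrtSwapAux

set_option linter.unnecessarySeqFocus false

lemma det_exch_two (θ : ℝ) : (exch 2 θ 0 1).det = Complex.exp (θ * Complex.I) ^ 2 := by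
  rw [← Matrix.det_submatrix_equiv_self (finFunctionFinEquiv (m := 2) (n := 2)).symm]
  have h : (exch 2 θ 0 1).submatrix finFunctionFinEquiv.symm finFunctionFinEquiv.symm
      = !![(Real.cos θ : ℂ)+Complex.I * (Real.sin θ : ℂ),0,0,0;
           0,(Real.cos θ : ℂ),Complex.I * (Real.sin θ : ℂ),0;
           0,Complex.I * (Real.sin θ : ℂ),(Real.cos θ : ℂ),0;
           0,0,0,(Real.cos θ : ℂ)+Complex.I * (Real.sin θ : ℂ)] := by
    ext i j
    fin_cases i <;> fin_cases j <;>
      simp (config := { decide := true }) [-map_zero, exch, swapM, Matrix.one_apply,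
        Matrix.submatrix_apply, Matrix.vecHead, Matrix.vecTail]
  rw [h, Matrix.det_succ_row_zero]
  simp [Fin.sum_univ_succ, Matrix.det_fin_three, Complex.exp_mul_I]
  ring_nf
  have h1 : (Complex.I)^2 = -1 := Complex.I_sq
  have h2 : Complex.sin ↑θ ^ 2 + Complex.cos ↑θ ^ 2 = 1 := Complex.sin_sq_add_cos_sq _
  set c := Complex.cos (θ:ℂ); set s := Complex.sin (θ:ℂ)
  linear_combination (-2*c*s^3*Complex.I - s^4*(Complex.I^2-1) - s^2) * h1
    + (2*c*Complex.I*s + c^2 - s^2) * h2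

lemma exists_perm (m : ℕ) (i j : Fin (m+2)) (hij : i ≠ j) :
    ∃ τ : Equiv.Perm (Fin (m+2)), τ 0 = i ∧ τ 1 = j := by
  classical
  let σ := Equiv.swap (0 : Fin (m+2)) i
  have hj : σ.symm j ≠ 0 := by
    intro h
    have : j = σ 0 := by rw [← h, Equiv.apply_symm_apply]
    simp [σ, Equiv.swap_apply_left] at this
    exact hij this.symm
  refine ⟨(Equiv.swap (1 : Fin (m+2)) (σ.symm j)).trans σ, ?_, ?_⟩
  · simp only [Equiv.trans_apply]
    rw [Equiv.swap_apply_of_ne_of_ne (show (0:Fin (m+2)) ≠ 1 from by simp [Fin.ext_iff])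
      (Ne.symm hj)]
    simp [σ, Equiv.swap_apply_left]
  · simp only [Equiv.trans_apply]
    rw [Equiv.swap_apply_left, Equiv.apply_symm_apply]

lemma det_exch (m : ℕ) (θ : ℝ) (i j : Fin (m+2)) (hij : i ≠ j) :
    (exch (m+2) θ i j).det = Complex.exp (θ * Complex.I) ^ (2^(m+1)) := by
  classical
  obtain ⟨τ, hτ0, hτ1⟩ := exists_perm m i j hij
  set g : Fin 2 ⊕ Fin m ≃ Fin (m+2) :=
    (finSumFinEquiv.trans (finCongr (by omega))).trans τ with hg
  have hg0 : g (Sum.inl 0) = i := by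
    have : (Fin.cast (by omega) (Fin.castAdd m (0 : Fin 2)) : Fin (m+2)) = 0 := by
      ext; simp
    simp [hg, Equiv.trans_apply, finCongr_apply, this, hτ0]
  have hg1 : g (Sum.inl 1) = j := by
    have : (Fin.cast (by omega) (Fin.castAdd m (1 : Fin 2)) : Fin (m+2)) = 1 := by
      ext; simp
    simp [hg, Equiv.trans_apply, finCongr_apply, this, hτ1]
  have hgr : ∀ r : Fin m, g (Sum.inr r) ≠ i ∧ g (Sum.inr r) ≠ j := by
    intro r
    constructor
    · rw [← hg0]; intro h; exact absurd (g.injective h) (by simp)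
    · rw [← hg1]; intro h; exact absurd (g.injective h) (by simp)
  have hswap : ∀ s : Fin 2 ⊕ Fin m,
      Equiv.swap i j (g s) = g (Sum.map (Equiv.swap (0:Fin 2) 1) id s) := by
    rintro (k | r)
    · fin_cases k
      · simp [hg0, hg1, Equiv.swap_apply_left]
      · simp [hg0, hg1, Equiv.swap_apply_right]
    · simp [Equiv.swap_apply_of_ne_of_ne (hgr r).1 (hgr r).2]
  set E : (Fin (m+2) → Fin 2) ≃ ((Fin 2 → Fin 2) × (Fin m → Fin 2)) :=
    (Equiv.arrowCongr g (Equiv.refl (Fin 2))).symm.trans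
      (Equiv.sumArrowEquivProdArrow _ _ _) with hEdef
  have hEapp : ∀ x : Fin (m+2) → Fin 2,
      E x = (fun k => x (g (Sum.inl k)), fun r => x (g (Sum.inr r))) := by
    intro x; rfl
  have hE : ∀ y : Fin (m+2) → Fin 2,
      E (y ∘ Equiv.swap i j) = ((E y).1 ∘ Equiv.swap (0:Fin 2) 1, (E y).2) := by
    intro y
    rw [hEapp, hEapp]
    refine Prod.ext ?_ ?_
    · funext k
      simp only [Function.comp_apply]
      rw [hswap (Sum.inl k)]
      rfl
    · funext r
      simp only [Function.comp_apply]
      rw [hswap (Sum.inr r)]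
      rfl
  have hmat : exch (m+2) θ i j =
      (Matrix.blockDiagonal fun _ : (Fin m → Fin 2) => exch 2 θ 0 1).submatrix E E := by
    ext x y
    have e1 : (x = y) ↔ ((E x).1 = (E y).1 ∧ (E x).2 = (E y).2) := by
      rw [← Prod.ext_iff, ← E.apply_eq_iff_eq]
    have e2 : (x = y ∘ Equiv.swap i j) ↔
        ((E x).1 = (E y).1 ∘ Equiv.swap (0:Fin 2) 1 ∧ (E x).2 = (E y).2) := by
      rw [← E.apply_eq_iff_eq, hE, Prod.ext_iff]
    rw [Matrix.submatrix_apply, ← Prod.mk.eta (p := E x), ← Prod.mk.eta (p := E y),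
      Matrix.blockDiagonal_apply]
    simp only [exch, swapM, Matrix.add_apply, Matrix.smul_apply, Matrix.one_apply,
      smul_eq_mul]
    by_cases hq : (E x).2 = (E y).2
    · simp only [hq, if_true]
      rw [if_congr e1 rfl rfl, if_congr e2 rfl rfl]
      simp [hq]
    · rw [if_neg hq, if_neg (fun h => hq (e1.mp h).2), if_neg (fun h => hq (e2.mp h).2)]
      simp
  rw [hmat, Matrix.det_submatrix_equiv_self, Matrix.det_blockDiagonal]
  rw [Finset.prod_const, det_exch_two]
  rw [← pow_mul]
  congr 1
  simp [Fintype.card_fun]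
  ring

def zv (n : ℕ) : Fin n → Fin 2 := fun _ => 0

lemma exch_col (n : ℕ) (θ : ℝ) (i j : Fin n) (x : Fin n → Fin 2) :
    exch n θ i j x (zv n) = if x = zv n then Complex.exp (θ * Complex.I) else 0 := by
  have h : zv n ∘ (Equiv.swap i j) = zv n := rfl
  simp only [exch, swapM, Matrix.add_apply, Matrix.smul_apply, Matrix.one_apply, h,
    smul_eq_mul, Complex.exp_mul_I]
  by_cases hx : x = zv n <;>
    simp [hx, Complex.ofReal_cos, Complex.ofReal_sin] <;> ring

lemma prod_col (n : ℕ) (θ : ℝ) (L : List (Fin n × Fin n)) (x : Fin n → Fin 2) :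
    ((L.map fun p => exch n θ p.1 p.2).prod) x (zv n)
      = if x = zv n then Complex.exp (θ * Complex.I) ^ L.length else 0 := by
  induction L generalizing x with
  | nil => simp [Matrix.one_apply]
  | cons p L ih =>
    simp only [List.map_cons, List.prod_cons, Matrix.mul_apply]
    have : ∀ y, exch n θ p.1 p.2 x y *
        ((L.map fun p => exch n θ p.1 p.2).prod) y (zv n)
        = if y = zv n then exch n θ p.1 p.2 x y * Complex.exp (θ * Complex.I) ^ L.length
          else 0 := by
      intro y; rw [ih]; split <;> simp
    rw [Finset.sum_congr rfl fun y _ => this y, Finset.sum_ite_eq' Finset.univ (zv n)]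
    simp [exch_col, List.length_cons]
    split <;> ring

end SqrtSwapAux

open SqrtSwapAux in
/-- The exchange gate `U(π/3)₁₂ = exp(i(π/3)·SWAP₁₂)` is not in the closure of the set of
global-phase multiples of `√SWAP` circuits: `XQP(π/4) ⊊ XQP`. -/
theorem sqrtSwap_not_dense (n : ℕ) (hn : 2 ≤ n) :
    exch n (Real.pi / 3) ⟨0, by omega⟩ ⟨1, by omega⟩ ∉ closure (sqrtSwapCircuits n) := by
  obtain ⟨m, rfl⟩ : ∃ m, n = m + 2 := ⟨n - 2, by omega⟩
  intro hmem
  set F : Matrix (Fin (m+2) → Fin 2) (Fin (m+2) → Fin 2) ℂ → ℂ :=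
    fun M => M.det ^ 8 *
      (starRingEnd ℂ (M (zv (m+2)) (zv (m+2)))) ^ (2^(m+5)) with hFdef
  have hF : Continuous F := by
    apply Continuous.mul
    · exact (continuous_id.matrix_det).pow 8
    · exact (Complex.continuous_conj.comp (continuous_id.matrix_elem _ _)).pow _
  have hsub : sqrtSwapCircuits (m+2) ⊆ F ⁻¹' {1} := by
    rintro M ⟨φ, L, hL, rfl⟩
    set l := L.length with hl
    set P := (L.map fun p => exch (m+2) (Real.pi / 4) p.1 p.2).prod with hP
    have hdetP : P.det = Complex.exp ((Real.pi/4) * Complex.I) ^ (2^(m+1) * l) := by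
      rw [hP, ← Matrix.coe_detMonoidHom, map_list_prod, List.map_map]
      rw [List.prod_eq_pow_card _ (Complex.exp ((Real.pi/4) * Complex.I) ^ (2^(m+1)))]
      · rw [List.length_map, ← pow_mul]
      · intro x hx
        simp only [List.mem_map, Function.comp_apply] at hx
        obtain ⟨p, hp, rfl⟩ := hx
        have := det_exch m (Real.pi/4) p.1 p.2 (hL p hp)
        rw [show ((Real.pi/4 : ℝ) : ℂ) = (Real.pi : ℂ)/4 from by push_cast; ring] at this
        exact this
    have hdetM : (Complex.exp (Complex.I * (φ:ℂ)) • P).det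
        = Complex.exp (Complex.I * (φ:ℂ)) ^ (2^(m+2)) *
          Complex.exp ((Real.pi/4) * Complex.I) ^ (2^(m+1) * l) := by
      rw [Matrix.det_smul, hdetP]
      congr 2
      simp [Fintype.card_fun]
    have hentM : (Complex.exp (Complex.I * (φ:ℂ)) • P) (zv (m+2)) (zv (m+2))
        = Complex.exp (Complex.I * (φ:ℂ)) *
          Complex.exp ((Real.pi/4) * Complex.I) ^ l := by
      rw [Matrix.smul_apply, hP, prod_col, if_pos rfl, smul_eq_mul, ← hl]
      norm_cast
    simp only [Set.mem_preimage, Set.mem_singleton_iff, hFdef]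
    rw [hdetM, hentM]
    rw [_root_.map_mul, map_pow, ← Complex.exp_conj, ← Complex.exp_conj]
    simp only [_root_.map_mul, Complex.conj_I, Complex.conj_ofReal, map_div₀, map_ofNat]
    simp only [← Complex.exp_nat_mul, ← Complex.exp_add]
    rw [show ((8:ℕ) : ℂ) * (((2 ^ (m + 2) : ℕ) : ℂ) * (Complex.I * (φ:ℂ))
            + ((2 ^ (m + 1) * l : ℕ) : ℂ) * ((Real.pi:ℂ)/4 * Complex.I))
          + ((2 ^ (m + 5) : ℕ) : ℂ) * (-Complex.I * (φ:ℂ)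
            + (l:ℂ) * ((Real.pi:ℂ)/4 * -Complex.I))
        = ((-(2^(m+1) * l) : ℤ) : ℂ) * (2 * (Real.pi : ℂ) * Complex.I) from ?_]
    · exact Complex.exp_int_mul_two_pi_mul_I _
    · push_cast [pow_succ]
      ring
  have h1 : F (exch (m+2) (Real.pi / 3) ⟨0, by omega⟩ ⟨1, by omega⟩) = 1 :=
    closure_minimal hsub (IsClosed.preimage hF isClosed_singleton) hmem
  have hij : (⟨0, by omega⟩ : Fin (m+2)) ≠ ⟨1, by omega⟩ := by simp [Fin.ext_iff]
  rw [hFdef] at h1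
  simp only at h1
  rw [det_exch m _ _ _ hij] at h1
  rw [show (exch (m+2) (Real.pi / 3) ⟨0, by omega⟩ ⟨1, by omega⟩) (zv (m+2)) (zv (m+2))
      = Complex.exp (((Real.pi/3 : ℝ) : ℂ) * Complex.I) from by
    rw [exch_col, if_pos rfl]] at h1
  rw [← Complex.exp_conj] at h1
  simp only [_root_.map_mul, Complex.conj_I, Complex.conj_ofReal, map_div₀, map_ofNat,
    Complex.ofReal_div, Complex.ofReal_ofNat] at h1
  simp only [← Complex.exp_nat_mul, ← Complex.exp_add] at h1
  rw [show ((8:ℕ) : ℂ) * (((2 ^ (m + 1) : ℕ) : ℂ) * ((Real.pi:ℂ)/3 * Complex.I))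
        + ((2 ^ (m + 5) : ℕ) : ℂ) * ((Real.pi:ℂ)/3 * -Complex.I)
      = ((-(2^(m+4)) * Real.pi / 3 : ℝ) : ℂ) * Complex.I from by
    push_cast [pow_succ]
    ring] at h1
  obtain ⟨k, hk⟩ := Complex.exp_eq_one_iff.mp h1
  have hπ := Real.pi_ne_zero
  have hre : ((-(2^(m+4)) * Real.pi / 3 : ℝ) : ℂ) = (k:ℂ) * (2 * (Real.pi:ℂ)) :=
    mul_right_cancel₀ Complex.I_ne_zero (by rw [hk]; ring)
  have him : (-(2^(m+4)) * Real.pi / 3 : ℝ) = (k:ℝ) * (2 * Real.pi) := by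
    exact_mod_cast hre
  have h2 : (-(2^(m+4)) / 3 : ℝ) * Real.pi = ((k:ℝ) * 2) * Real.pi := by
    linear_combination him
  have h3 := mul_right_cancel₀ hπ h2
  have hk4 : -((2:ℤ)^(m+4)) = 6 * k := by
    have : (-(2^(m+4)) : ℝ) = 6 * (k:ℝ) := by linarith
    exact_mod_cast this
  have hdvd : (3:ℤ) ∣ 2^(m+4) := ⟨-(2*k), by linarith⟩
  have hdvd' : (3:ℕ) ∣ 2^(m+4) := by exact_mod_cast hdvd
  have := Nat.Prime.dvd_of_dvd_pow (p := 3) (by norm_num) hdvd'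
  norm_num at this
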